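/- For the ρ-margin loss φ_ρ(α) = min(1, max(1 - α/ρ, 0)), for every η ∈ [0,1], inf_{α ∈ ℝ} (η·φ_ρ(α) + (1-η)·φ_ρ(-α)) = min(η, 1-η). -/

import Mathlib

theorem stmt_8 (ρ : ℝ) (hρ : 0 < ρ)
    (φ : ℝ → ℝ) (hφ : ∀ α, φ α = min 1 (max (1 - α / ρ) 0))
    (η : ℝ) (hη : η ∈ Set.Icc (0 : ℝ) 1) :
    (⨅ α : ℝ, (η * φ α + (1 - η) * φ (-α))) = min η (1 - η) := by
  obtain ⟨h0, h1⟩ := hη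
  have hφ01 : ∀ α, 0 ≤ φ α ∧ φ α ≤ 1 := by
    intro α; rw [hφ]
    constructor
    · exact le_min (by norm_num) (le_max_right _ _)
    · exact min_le_left _ _
  have hlow : ∀ α : ℝ, min η (1 - η) ≤ η * φ α + (1 - η) * φ (-α) := by
    intro α
    rcases le_or_gt α 0 with h | h
    · have hφ1 : φ α = 1 := by
        rw [hφ]
        have : (1:ℝ) ≤ 1 - α / ρ := by
          have : α / ρ ≤ 0 := div_nonpos_of_nonpos_of_nonneg h hρ.le
          linarith
        rw [max_eq_left (by linarith), min_eq_left this]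
      have := (hφ01 (-α)).1
      calc min η (1 - η) ≤ η := min_le_left _ _
        _ = η * φ α := by rw [hφ1]; ring
        _ ≤ _ := by nlinarith
    · have hφ1 : φ (-α) = 1 := by
        rw [hφ]
        have : (1:ℝ) ≤ 1 - (-α) / ρ := by
          have : 0 < α / ρ := div_pos h hρ
          rw [neg_div]; linarith
        rw [max_eq_left (by linarith), min_eq_left this]
      have := (hφ01 α).1
      calc min η (1 - η) ≤ 1 - η := min_le_right _ _
        _ = (1 - η) * φ (-α) := by rw [hφ1]; ring
        _ ≤ _ := by nlinarith
  have hbdd : BddBelow (Set.range fun α : ℝ => η * φ α + (1 - η) * φ (-α)) :=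
    ⟨min η (1 - η), by rintro x ⟨α, rfl⟩; exact hlow α⟩
  apply le_antisymm
  · apply le_min
    · calc (⨅ α : ℝ, (η * φ α + (1 - η) * φ (-α))) ≤ η * φ (-ρ) + (1 - η) * φ (-(-ρ)) :=
          ciInf_le hbdd (-ρ)
        _ = η := by
          rw [hφ, hφ, neg_neg]
          rw [show (1:ℝ) - (-ρ)/ρ = 2 by field_simp; ring, show (1:ℝ) - ρ/ρ = 0 by
            field_simp; ring]
          norm_num
    · calc (⨅ α : ℝ, (η * φ α + (1 - η) * φ (-α))) ≤ η * φ ρ + (1 - η) * φ (-ρ) :=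
          ciInf_le hbdd ρ
        _ = 1 - η := by
          rw [hφ, hφ]
          rw [show (1:ℝ) - (-ρ)/ρ = 2 by field_simp; ring, show (1:ℝ) - ρ/ρ = 0 by
            field_simp; ring]
          norm_num
  · exact le_ciInf hlow
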